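/- The energy E(p) of a Λ₀-path p equals the number of nodes of colour 0 in the highest-lift partition λ(p) coloured with 0, i.e. E(p) = #{(i,j) : 1 ≤ j ≤ λ(p)_i, j - i ≡ 0 (mod n)}. -/

import Mathlib

/-- A `Λ₀`-path: a sequence `γ : ℕ → {0,…,n-1}` with `γ k = k % n` for all large `k`. -/
def PathSet (n : ℕ) : Set (ℕ → ℕ) :=
  {γ | (∀ k, γ k < n) ∧ ∃ K, ∀ k, K ≤ k → γ k = k % n}

/-- The length of a path: the minimal `K` with `γ k = k % n` for all `k ≥ K`. -/
noncomputable def plen (n : ℕ) (γ : ℕ → ℕ) : ℕ :=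
  sInf {K | ∀ k, K ≤ k → γ k = k % n}

/-- The sequence `t_k` of the highest-lift construction: `t_k = 0` for `k ≥ k*`, and,
recursively downwards, `t_k ≡ k - γ k (mod n)` with `0 ≤ t_k - t_{k+1} < n`. -/
def tseq (n : ℕ) (γ : ℕ → ℕ) (kstar : ℕ) (k : ℕ) : ℤ :=
  if h : kstar ≤ k then 0
  else tseq n γ kstar (k + 1) + (((k : ℤ) - γ k - tseq n γ kstar (k + 1)) % n)
termination_by kstar - k
decreasing_by omega

/-- The highest-lift partition of a path, given as the (weakly decreasing) sequence of
its parts: part number `j+1` is the number of `k` with `t_k ≥ j+1`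
(i.e. the partition whose conjugate is `(t_0, t_1, …, t_{k*-1})`). -/
noncomputable def highestLift (n : ℕ) (γ : ℕ → ℕ) : ℕ → ℕ :=
  fun j => {k : ℕ | (j : ℤ) + 1 ≤ tseq n γ (plen n γ) k}.ncard

/-- A partition, given as a weakly decreasing sequence of parts (extended by zeros). -/
def IsPartitionFun (f : ℕ → ℕ) : Prop :=
  (∀ i j : ℕ, i ≤ j → f j ≤ f i) ∧ ∃ N, ∀ i, N ≤ i → f i = 0

/-- The set of `n`-regular partitions: no part value `v ≥ 1` occurs `n` or more times. -/
def RegularSet (n : ℕ) : Set (ℕ → ℕ) :=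
  {f | IsPartitionFun f ∧ ∀ v : ℕ, 1 ≤ v → {j : ℕ | f j = v}.ncard < n}

/-- `H(a,b) = 0` if `a < b`, and `1` if `a ≥ b`. -/
def Hfun (a b : ℕ) : ℤ := if a < b then 0 else 1

/-- The energy of a path: `E(p) = Σ_{k≥1} k (H(γ(k-1),γ(k)) - H(γ̄(k-1),γ̄(k)))`,
where `γ̄ k = k % n`; the terms with `k > k*` vanish, so the sum may be taken
over `1 ≤ k ≤ k*`. -/
noncomputable def energy (n : ℕ) (γ : ℕ → ℕ) : ℤ :=
  ∑ k ∈ Finset.Icc 1 (plen n γ),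
    (k : ℤ) * (Hfun (γ (k - 1)) (γ k) - Hfun ((k - 1) % n) (k % n))

lemma tseq_of_le' {n : ℕ} {γ : ℕ → ℕ} {kstar k : ℕ} (h : kstar ≤ k) :
    tseq n γ kstar k = 0 := by rw [tseq]; simp [h]

lemma tseq_of_lt' {n : ℕ} {γ : ℕ → ℕ} {kstar k : ℕ} (h : k < kstar) :
    tseq n γ kstar k =
      tseq n γ kstar (k + 1) + (((k : ℤ) - γ k - tseq n γ kstar (k + 1)) % n) := by
  rw [tseq]; simp [Nat.not_le.mpr h]

lemma dvd_emod_sub_self' {n x : ℤ} : n ∣ x % n - x :=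
  ⟨-(x / n), by rw [Int.emod_def]; ring⟩

lemma dvd_self_sub_emod' {n x : ℤ} : n ∣ x - x % n := by
  have h := dvd_emod_sub_self' (n := n) (x := x)
  rw [show x - x % n = -(x % n - x) by ring]
  exact h.neg_right

section
variable {n : ℕ} {γ : ℕ → ℕ} {kstar : ℕ}

lemma tseq_step' (hn : 0 < n) (k : ℕ) :
    tseq n γ kstar (k + 1) ≤ tseq n γ kstar k ∧
      tseq n γ kstar k - tseq n γ kstar (k + 1) < n := by
  have hn' : (0:ℤ) < n := by exact_mod_cast hn
  by_cases h : kstar ≤ k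
  · rw [tseq_of_le' h, tseq_of_le' (show kstar ≤ k + 1 by omega)]
    omega
  · rw [tseq_of_lt' (show k < kstar by omega)]
    have h1 := Int.emod_nonneg ((k : ℤ) - γ k - tseq n γ kstar (k + 1)) (by omega : (n:ℤ) ≠ 0)
    have h2 := Int.emod_lt_of_pos ((k : ℤ) - γ k - tseq n γ kstar (k + 1)) hn'
    omega

lemma tseq_nonneg' (hn : 0 < n) (k : ℕ) : 0 ≤ tseq n γ kstar k := by
  by_cases h : kstar ≤ k
  · rw [tseq_of_le' h]
  · have h1 := tseq_nonneg' hn (k + 1)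
    have h2 := (tseq_step' (γ := γ) (kstar := kstar) hn k).1
    omega
termination_by kstar - k
decreasing_by omega

lemma tseq_anti' (hn : 0 < n) : Antitone (tseq n γ kstar) :=
  antitone_nat_of_succ_le fun k => (tseq_step' hn k).1

lemma tseq_cong' (hk : ∀ j, kstar ≤ j → γ j = j % n) (k : ℕ) :
    (n:ℤ) ∣ tseq n γ kstar k - ((k:ℤ) - γ k) := by
  by_cases h : kstar ≤ k
  · rw [tseq_of_le' h, hk k h]
    push_cast
    rw [show (0:ℤ) - ((k:ℤ) - (k:ℤ) % n) = (k:ℤ) % n - k by ring]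
    exact dvd_emod_sub_self'
  · rw [tseq_of_lt' (show k < kstar by omega)]
    rw [show tseq n γ kstar (k + 1) + ((k:ℤ) - γ k - tseq n γ kstar (k + 1)) % n - ((k:ℤ) - γ k)
        = ((k : ℤ) - γ k - tseq n γ kstar (k + 1)) % n
          - ((k : ℤ) - γ k - tseq n γ kstar (k + 1)) by ring]
    exact dvd_emod_sub_self'
end

lemma abs_helper' {n z : ℤ} (hd : n ∣ z) (h1 : -n < z) (h2 : z < n) : z = 0 :=
  Int.eq_zero_of_abs_lt_dvd hd (abs_lt.2 ⟨h1, h2⟩)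

lemma Hfun_eq' {n a b : ℕ} {d : ℤ} (ha : a < n) (hb : b < n)
    (hd0 : 0 ≤ d) (hdn : d < n) (h1 : (n:ℤ) ∣ d - ((b:ℤ) - a - 1)) :
    (n:ℤ) * Hfun a b = d - (b:ℤ) + a + 1 := by
  have ha' : (a:ℤ) < n := by exact_mod_cast ha
  have hb' : (b:ℤ) < n := by exact_mod_cast hb
  have ha0 : (0:ℤ) ≤ a := Int.natCast_nonneg a
  have hb0 : (0:ℤ) ≤ b := Int.natCast_nonneg b
  unfold Hfun
  split_ifs with h
  · have hab : (a:ℤ) < b := by exact_mod_cast h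
    have := abs_helper' h1 (by omega) (by omega)
    omega
  · have hab : (b:ℤ) ≤ a := by exact_mod_cast Nat.le_of_not_lt h
    have h1' : (n:ℤ) ∣ (d - ((b:ℤ) - a - 1)) - n := h1.sub dvd_rfl
    have := abs_helper' h1' (by omega) (by omega)
    omega

lemma tel' (a : ℕ → ℤ) (K : ℕ) :
    ∑ k ∈ Finset.Icc 1 K, (k:ℤ) * (a (k-1) - a k)
      = (∑ k ∈ Finset.range K, a k) - K * a K := by
  induction K with
  | zero => simp
  | succ K ih =>
    rw [Finset.sum_Icc_succ_top (by omega : 1 ≤ K + 1), ih, Finset.sum_range_succ]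
    rw [show (K + 1 : ℕ) - 1 = K by omega]
    push_cast
    ring

lemma count_card' (n k T g q : ℕ) (hn : 0 < n) (hg : g < n)
    (hq : (n:ℤ) * q = (T:ℤ) + g - ((k % n : ℕ):ℤ)) :
    ((Finset.Icc 1 T).filter (fun i => (k+1) % n = i % n)).card = q := by
  have hn' : (0:ℤ) < n := by exact_mod_cast hn
  have hmodlt : k % n < n := Nat.mod_lt _ hn
  have himg : (Finset.Icc 1 T).filter (fun i => (k+1) % n = i % n)
      = (Finset.range q).image (fun m => k % n + 1 + n * m) := by
    ext i
    simp only [Finset.mem_filter, Finset.mem_Icc, Finset.mem_image, Finset.mem_range]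
    constructor
    · rintro ⟨⟨h1i, hiT⟩, hmod⟩
      have hd : (n:ℤ) ∣ (i:ℤ) - ((k % n : ℕ) + 1 : ℕ) := by
        have h1 : (n:ℤ) ∣ (i:ℤ) - ((k:ℤ)+1) := by
          exact_mod_cast (Nat.modEq_iff_dvd (n := n) (a := k+1) (b := i)).1 hmod
        have h2 : (n:ℤ) ∣ ((k:ℤ) - (k:ℤ) % n) := dvd_self_sub_emod'
        rw [show (i:ℤ) - ((k % n : ℕ) + 1 : ℕ)
            = ((i:ℤ) - ((k:ℤ)+1)) + ((k:ℤ) - (k:ℤ) % n) by push_cast; ring]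
        exact dvd_add h1 h2
      obtain ⟨c, hc⟩ := hd
      have hrle : k % n + 1 ≤ n := by omega
      have hc0 : (0:ℤ) ≤ c := by
        by_contra hcon
        push_neg at hcon
        have : (n:ℤ) * c ≤ n * (-1) := mul_le_mul_of_nonneg_left (by omega) (le_of_lt hn')
        have hin : (1:ℤ) ≤ (i:ℤ) := by exact_mod_cast h1i
        have hrn : ((k % n : ℕ) + 1 : ℤ) ≤ n := by exact_mod_cast hrle
        push_cast at hc
        omega
      have hcq : c < q := by
        by_contra hcon
        push_neg at hcon
        have : (n:ℤ) * q ≤ n * c := mul_le_mul_of_nonneg_left hcon (le_of_lt hn')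
        have hiT' : (i:ℤ) ≤ T := by exact_mod_cast hiT
        push_cast at hc
        omega
      refine ⟨c.toNat, by omega, ?_⟩
      have : ((k % n + 1 + n * c.toNat : ℕ) : ℤ) = (i:ℤ) := by
        push_cast [Int.toNat_of_nonneg hc0]
        omega
      exact_mod_cast this
    · rintro ⟨m, hm, rfl⟩
      have hnm : (n:ℤ) * ((m:ℤ)+1) ≤ n * q :=
        mul_le_mul_of_nonneg_left (by exact_mod_cast hm) (le_of_lt hn')
      have hexp : (n:ℤ) * ((m:ℤ)+1) = n * m + n := by ring
      refine ⟨⟨by omega, ?_⟩, ?_⟩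
      · have : ((k % n + 1 + n * m : ℕ) : ℤ) ≤ T := by
          push_cast
          have hg' : (g:ℤ) < n := by exact_mod_cast hg
          omega
        exact_mod_cast this
      · have hdd : (n:ℤ) ∣ ((k % n + 1 + n * m : ℕ) : ℤ) - ((k:ℤ)+1) := by
          have h2 : (n:ℤ) ∣ ((k:ℤ) % n - (k:ℤ)) := dvd_emod_sub_self'
          rw [show ((k % n + 1 + n * m : ℕ) : ℤ) - ((k:ℤ)+1)
              = ((k:ℤ) % n - (k:ℤ)) + n * m by push_cast; ring]
          exact dvd_add h2 (Dvd.intro _ rfl)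
        exact (Nat.modEq_iff_dvd (n := n) (a := k+1) (b := k % n + 1 + n * m)).2
          (by exact_mod_cast hdd)
  rw [himg, Finset.card_image_of_injective _ ?_, Finset.card_range]
  intro a b hab
  simp only at hab
  exact Nat.eq_of_mul_eq_mul_left hn (by omega)

/-- The energy of a `Λ₀`-path equals the number of colour-`0` nodes of its highest-lift
partition coloured with `0`: the nodes `(i,j)` with `1 ≤ j ≤ λ_i` and `j - i ≡ 0 (mod n)`. -/
theorem stmt5 (n : ℕ) (hn : 2 ≤ n) (γ : ℕ → ℕ) (hγ : γ ∈ PathSet n) :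
    energy n γ =
      ({p : ℕ × ℕ | 1 ≤ p.1 ∧ 1 ≤ p.2 ∧ p.2 ≤ highestLift n γ (p.1 - 1) ∧
        ((p.2 : ℤ) - (p.1 : ℤ)) % (n : ℤ) = 0}.ncard : ℤ) := by
  obtain ⟨hγlt, hKex⟩ := hγ
  have hn0 : 0 < n := by omega
  have hn' : (0:ℤ) < n := by exact_mod_cast hn0
  set K := plen n γ with hKdef
  have hK : ∀ k, K ≤ k → γ k = k % n := Nat.sInf_mem hKex
  set t : ℕ → ℤ := tseq n γ K with htdef
  have ht0 : ∀ k, K ≤ k → t k = 0 := fun k h => tseq_of_le' h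
  have htnn : ∀ k, 0 ≤ t k := tseq_nonneg' hn0
  have htanti : Antitone t := tseq_anti' hn0
  have htcong : ∀ k, (n:ℤ) ∣ t k - ((k:ℤ) - γ k) := tseq_cong' hK
  have hstep : ∀ k, t (k+1) ≤ t k ∧ t k - t (k+1) < n := by
    rw [htdef]; exact fun k => tseq_step' hn0 k
  set s : ℕ → ℤ := fun k => (γ k : ℤ) - ((k % n : ℕ) : ℤ) with hsdef
  set a : ℕ → ℤ := fun k => t k + s k with hadef
  have haK : a K = 0 := by
    simp only [hadef, hsdef, ht0 K le_rfl, hK K le_rfl]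
    ring
  -- energy side
  have hperterm : ∀ k ∈ Finset.Icc 1 K,
      (n:ℤ) * ((k:ℤ) * (Hfun (γ (k-1)) (γ k) - Hfun ((k-1) % n) (k % n)))
        = (k:ℤ) * (a (k-1) - a k) := by
    intro k hk
    rw [Finset.mem_Icc] at hk
    obtain ⟨h1k, hkK⟩ := hk
    have hpred : (k - 1) + 1 = k := by omega
    have hcast : ((k-1:ℕ):ℤ) = (k:ℤ) - 1 := by
      push_cast [h1k]; ring
    have hd := hstep (k-1)
    rw [hpred] at hd
    have h1 : (n:ℤ) ∣ (t (k-1) - t k) - ((γ k:ℤ) - (γ (k-1):ℤ) - 1) := by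
      have hsub := dvd_sub (htcong (k-1)) (htcong k)
      rw [show t (k-1) - (((k-1:ℕ):ℤ) - γ (k-1)) - (t k - ((k:ℤ) - γ k))
          = (t (k-1) - t k) - ((γ k:ℤ) - (γ (k-1):ℤ) - 1) - (((k-1:ℕ):ℤ) - ((k:ℤ) - 1))
          by ring, hcast] at hsub
      simpa using hsub
    have hH1 : (n:ℤ) * Hfun (γ (k-1)) (γ k)
        = (t (k-1) - t k) - (γ k:ℤ) + (γ (k-1):ℤ) + 1 :=
      Hfun_eq' (hγlt _) (hγlt _) (by omega) (by exact_mod_cast hd.2) h1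
    have h2 : (n:ℤ) ∣ (0:ℤ) - (((k % n : ℕ):ℤ) - (((k-1) % n : ℕ):ℤ) - 1) := by
      have hA : (n:ℤ) ∣ ((k:ℤ)-1) % n - ((k:ℤ)-1) := dvd_emod_sub_self'
      have hB : (n:ℤ) ∣ (k:ℤ) - (k:ℤ) % n := dvd_self_sub_emod'
      have hsum := dvd_add hA hB
      have hee : (0:ℤ) - (((k % n : ℕ):ℤ) - (((k-1) % n : ℕ):ℤ) - 1)
          = (((k:ℤ)-1) % n - ((k:ℤ)-1)) + ((k:ℤ) - (k:ℤ) % n) := by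
        push_cast [hcast]
        ring
      rw [hee]
      exact hsum
    have hH2 : (n:ℤ) * Hfun ((k-1) % n) (k % n)
        = 0 - ((k % n:ℕ):ℤ) + (((k-1) % n:ℕ):ℤ) + 1 :=
      Hfun_eq' (Nat.mod_lt _ hn0) (Nat.mod_lt _ hn0) le_rfl hn' h2
    have hkey : (n:ℤ) * (Hfun (γ (k-1)) (γ k) - Hfun ((k-1) % n) (k % n))
        = a (k-1) - a k := by
      simp only [hadef, hsdef]
      rw [mul_sub, hH1, hH2]
      ring
    calc (n:ℤ) * ((k:ℤ) * (Hfun (γ (k-1)) (γ k) - Hfun ((k-1) % n) (k % n)))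
        = (k:ℤ) * ((n:ℤ) * (Hfun (γ (k-1)) (γ k) - Hfun ((k-1) % n) (k % n))) := by ring
      _ = (k:ℤ) * (a (k-1) - a k) := by rw [hkey]
  have hE : (n:ℤ) * energy n γ = ∑ k ∈ Finset.range K, a k := by
    unfold energy
    rw [← hKdef, Finset.mul_sum, Finset.sum_congr rfl hperterm, tel' a K, haK]
    ring
  -- counting side
  set c : ℕ → ℕ := fun k =>
    ((Finset.Icc 1 (t k).toNat).filter (fun i => (k+1) % n = i % n)).card with hcdef
  have hceq : ∀ k, (n:ℤ) * (c k : ℤ) = a k := by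
    intro k
    have hdvd : (n:ℤ) ∣ t k + γ k - ((k % n : ℕ):ℤ) := by
      have hB : (n:ℤ) ∣ (k:ℤ) - ((k % n : ℕ):ℤ) := by
        rw [show ((k % n : ℕ):ℤ) = (k:ℤ) % n by push_cast; ring]
        exact dvd_self_sub_emod'
      have hsum := dvd_add (htcong k) hB
      rw [show t k - ((k:ℤ) - γ k) + ((k:ℤ) - ((k % n : ℕ):ℤ))
          = t k + γ k - ((k % n : ℕ):ℤ) by ring] at hsum
      exact hsum
    obtain ⟨c0, hc0⟩ := hdvd
    have hkn : ((k % n : ℕ):ℤ) < n := by exact_mod_cast Nat.mod_lt k hn0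
    have hknn : (0:ℤ) ≤ ((k % n : ℕ):ℤ) := Int.natCast_nonneg _
    have hg0 : (0:ℤ) ≤ γ k := Int.natCast_nonneg _
    have hc0nn : 0 ≤ c0 := by
      by_contra hcon
      push_neg at hcon
      have hle : (n:ℤ) * c0 ≤ n * (-1) :=
        mul_le_mul_of_nonneg_left (by omega) (le_of_lt hn')
      have := htnn k
      omega
    have hq : (n:ℤ) * (c0.toNat : ℕ) = (((t k).toNat : ℕ):ℤ) + γ k - ((k % n : ℕ):ℤ) := by
      rw [Int.toNat_of_nonneg hc0nn, Int.toNat_of_nonneg (htnn k)]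
      omega
    have hcard := count_card' n k (t k).toNat (γ k) c0.toNat hn0 (hγlt k) hq
    simp only [hcdef, hadef, hsdef]
    rw [hcard, Int.toNat_of_nonneg hc0nn]
    omega
  have hsum2 : ∑ k ∈ Finset.range K, a k = (n:ℤ) * ((∑ k ∈ Finset.range K, c k : ℕ) : ℤ) := by
    rw [← Finset.sum_congr rfl (fun k _ => hceq k)]
    push_cast
    rw [Finset.mul_sum]
  -- the node set
  set F : Finset (ℕ × ℕ) := (Finset.range K).biUnion
    (fun k => ((Finset.Icc 1 (t k).toNat).filter (fun i => (k+1) % n = i % n)).image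
      (fun i => (i, k+1))) with hFdef
  have hHL : ∀ i j : ℕ, 1 ≤ i → 1 ≤ j →
      (j ≤ highestLift n γ (i - 1) ↔ (i:ℤ) ≤ t (j-1)) := by
    intro i j h1i h1j
    have hci : ((i - 1 : ℕ) : ℤ) + 1 = (i:ℤ) := by push_cast [h1i]; ring
    have hAset : {k : ℕ | ((i-1:ℕ):ℤ) + 1 ≤ tseq n γ (plen n γ) k}
        = {k : ℕ | (i:ℤ) ≤ t k} := by
      rw [hci, ← hKdef, ← htdef]
    unfold highestLift
    rw [hAset]
    have hfin : {k : ℕ | (i:ℤ) ≤ t k}.Finite := by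
      apply Set.Finite.subset (Finset.range K).finite_toSet
      intro k hk
      simp only [Set.mem_setOf_eq] at hk
      simp only [Finset.coe_range, Set.mem_Iio]
      by_contra h
      push_neg at h
      rw [ht0 k h] at hk
      have : (1:ℤ) ≤ i := by exact_mod_cast h1i
      omega
    constructor
    · intro hle
      by_contra hcon
      push_neg at hcon
      have hsub2 : {k : ℕ | (i:ℤ) ≤ t k} ⊆ ↑(Finset.range (j-1)) := by
        intro k hk
        simp only [Set.mem_setOf_eq] at hk
        simp only [Finset.coe_range, Set.mem_Iio]
        by_contra h
        push_neg at h
        have := htanti h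
        omega
      have hle2 := Set.ncard_le_ncard hsub2 (Finset.range (j-1)).finite_toSet
      rw [Set.ncard_coe_finset, Finset.card_range] at hle2
      omega
    · intro hle
      have hsub2 : ↑(Finset.range j) ⊆ {k : ℕ | (i:ℤ) ≤ t k} := by
        intro k hk
        simp only [Finset.coe_range, Set.mem_Iio] at hk
        simp only [Set.mem_setOf_eq]
        exact le_trans hle (htanti (by omega : k ≤ j - 1))
      have hle2 := Set.ncard_le_ncard hsub2 hfin
      rw [Set.ncard_coe_finset, Finset.card_range] at hle2
      exact hle2
  have hSF : {p : ℕ × ℕ | 1 ≤ p.1 ∧ 1 ≤ p.2 ∧ p.2 ≤ highestLift n γ (p.1 - 1) ∧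
      ((p.2 : ℤ) - (p.1 : ℤ)) % (n : ℤ) = 0} = ↑F := by
    ext ⟨i, j⟩
    simp only [Set.mem_setOf_eq, hFdef, Finset.coe_biUnion, Finset.mem_coe,
      Set.mem_iUnion, Finset.mem_image, Finset.mem_filter, Finset.mem_Icc,
      Finset.mem_range, Prod.mk.injEq]
    constructor
    · rintro ⟨h1i, h1j, hjHL, hmod⟩
      have hij : (i:ℤ) ≤ t (j-1) := (hHL i j h1i h1j).1 hjHL
      have hjK : j - 1 < K := by
        by_contra h
        push_neg at h
        rw [ht0 _ h] at hij
        have : (1:ℤ) ≤ i := by exact_mod_cast h1i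
        omega
      have hiT : i ≤ (t (j-1)).toNat := by omega
      have hmodn : (j - 1 + 1) % n = i % n := by
        rw [show j - 1 + 1 = j by omega]
        symm
        apply (Nat.modEq_iff_dvd (n := n) (a := i) (b := j)).2
        exact Int.dvd_of_emod_eq_zero hmod
      exact ⟨j-1, hjK, i, ⟨⟨h1i, hiT⟩, hmodn⟩, rfl, by omega⟩
    · rintro ⟨k, hkK, x, ⟨⟨h1x, hxT⟩, hmodx⟩, rfl, rfl⟩
      refine ⟨h1x, by omega, ?_, ?_⟩
      · apply (hHL x (k+1) h1x (by omega)).2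
        have : (x:ℤ) ≤ ((t k).toNat : ℤ) := by exact_mod_cast hxT
        rw [Int.toNat_of_nonneg (htnn k)] at this
        simpa using this
      · apply Int.emod_eq_zero_of_dvd
        have : (n:ℤ) ∣ (x:ℤ) - ((k+1:ℕ):ℤ) := by
          exact_mod_cast (Nat.modEq_iff_dvd (n := n) (a := k+1) (b := x)).1 hmodx
        rw [show ((k+1:ℕ):ℤ) - (x:ℤ) = -((x:ℤ) - ((k+1:ℕ):ℤ)) by ring]
        exact this.neg_right
  have hcardF : F.card = ∑ k ∈ Finset.range K, c k := by
    rw [hFdef]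
    rw [Finset.card_biUnion]
    · apply Finset.sum_congr rfl
      intro k _
      rw [Finset.card_image_of_injective]
      intro x y hxy
      exact (Prod.ext_iff.1 hxy).1
    · intro k1 _ k2 _ hne
      rw [Function.onFun, Finset.disjoint_left]
      intro p hp1 hp2
      simp only [Finset.mem_image] at hp1 hp2
      obtain ⟨x1, _, rfl⟩ := hp1
      obtain ⟨x2, _, heq⟩ := hp2
      have h12 : k2 + 1 = k1 + 1 := (Prod.ext_iff.1 heq).2
      exact hne (by omega)
  have hncard : ({p : ℕ × ℕ | 1 ≤ p.1 ∧ 1 ≤ p.2 ∧ p.2 ≤ highestLift n γ (p.1 - 1) ∧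
      ((p.2 : ℤ) - (p.1 : ℤ)) % (n : ℤ) = 0}.ncard : ℤ)
      = ((∑ k ∈ Finset.range K, c k : ℕ) : ℤ) := by
    rw [hSF, Set.ncard_coe_finset, hcardF]
  exact mul_left_cancel₀ (ne_of_gt hn') (by rw [hE, hsum2, hncard])
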